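/- Let h : A → B be a lattice homomorphism between distributive lattices and f : Spec B → Spec A its Priestley dual. Then h is Frobenius (for every a ∈ A, the lax square of p_a : A → ↓a, h, p_{h(a)} : B → ↓h(a), and the restriction of h has the interpolation property) if and only if f is bounded (the direct image under f of every up-set of Spec B is an up-set of Spec A). -/
import Mathlib


/-- A point of the Priestley dual of a bounded lattice `A`: a bounded lattice
homomorphism `A → 2`, encoded as a `Bool`-valued function. -/
def IsSpecPoint {A : Type*} [Lattice A] [BoundedOrder A] (x : A → Bool) : Prop :=
  (∀ a b : A, x (a ⊓ b) = (x a && x b)) ∧ (∀ a b : A, x (a ⊔ b) = (x a || x b)) ∧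
    x ⊤ = true ∧ x ⊥ = false

/-- The Priestley dual space of a bounded lattice `A`, with the pointwise order
(and, as a subspace of `A → Bool`, the Priestley topology). -/
abbrev SpecL (A : Type*) [Lattice A] [BoundedOrder A] : Type _ :=
  {x : A → Bool // IsSpecPoint x}

private lemma bool_le_true {s t : Bool} (h : s ≤ t) (hs : s = true) : t = true := by
  subst hs; revert h; cases t <;> decide

/-- Spec points are monotone. -/
private lemma specMono {A : Type*} [Lattice A] [BoundedOrder A] {x : A → Bool}
    (hx : IsSpecPoint x) {a b : A} (hab : a ≤ b) (ha : x a = true) : x b = true := by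
  have hb : a ⊔ b = b := sup_eq_right.mpr hab
  have := hx.2.1 a b
  rw [hb, ha] at this
  simp at this
  exact this

/-- From a filter disjoint from an ideal, produce a spec point separating them. -/
private lemma exists_sep_point {A : Type*} [DistribLattice A] [BoundedOrder A]
    (F I : Set A) (hF : Order.IsPFilter F) (hI : Order.IsIdeal I)
    (hd : ∀ w, w ∈ F → w ∉ I) :
    ∃ x : SpecL A, (∀ a ∈ F, x.1 a = true) ∧ (∀ a ∈ I, x.1 a = false) := by
  classical
  obtain ⟨J, hJ, hIJ, hdisj⟩ := DistribLattice.prime_ideal_of_disjoint_filter_ideal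
    (F := hF.toPFilter) (I := hI.toIdeal) (by
      rw [Set.disjoint_left]; intro w hw hwI; exact hd w hw hwI)
  have hJF : ∀ w ∈ F, w ∉ J := fun w hw hwJ => Set.disjoint_left.mp hdisj hw hwJ
  have hJI : ∀ w ∈ I, w ∈ J := fun w hw => hIJ hw
  refine ⟨⟨fun a => if a ∈ J then false else true, ?_, ?_, ?_, ?_⟩, ?_, ?_⟩
  · -- inf
    intro a b
    by_cases ha : a ∈ J <;> by_cases hb : b ∈ J
    · have : a ⊓ b ∈ J := J.lower inf_le_left ha
      simp [ha, hb, this]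
    · have : a ⊓ b ∈ J := J.lower inf_le_left ha
      simp [ha, hb, this]
    · have : a ⊓ b ∈ J := J.lower inf_le_right hb
      simp [ha, hb, this]
    · have : a ⊓ b ∉ J := fun hmem => (hJ.mem_or_mem hmem).elim ha hb
      simp [ha, hb, this]
  · -- sup
    intro a b
    by_cases ha : a ∈ J <;> by_cases hb : b ∈ J
    · have : a ⊔ b ∈ J := Order.Ideal.sup_mem ha hb
      simp [ha, hb, this]
    · have : a ⊔ b ∉ J := fun hmem => hb (J.lower le_sup_right hmem)
      simp [ha, hb, this]
    · have : a ⊔ b ∉ J := fun hmem => ha (J.lower le_sup_left hmem)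
      simp [ha, hb, this]
    · have : a ⊔ b ∉ J := fun hmem => ha (J.lower le_sup_left hmem)
      simp [ha, hb, this]
  · -- top
    have : (⊤ : A) ∉ J := hJ.toIsProper.top_notMem
    simp [this]
  · -- bot
    simp [J.bot_mem]
  · intro a ha; simp [hJF a ha]
  · intro a ha; simp [hJI a ha]

/-- A homomorphism `h : A → B` of bounded distributive lattices is Frobenius
(each square with the projections `p_a` has the interpolation property) iff its Priestley
dual `f : Spec B → Spec A`, `f x = x ∘ h`, is bounded (direct images of up-sets are
up-sets). -/
theorem stmt_7 {A B : Type*} [DistribLattice A] [BoundedOrder A]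
    [DistribLattice B] [BoundedOrder B]
    (h : BoundedLatticeHom A B)
    (f : SpecL B → SpecL A)
    (hf : ∀ (x : SpecL B) (a : A), (f x).1 a = x.1 (h a)) :
    (∀ (a c : A) (b : B), c ≤ a → h a ⊓ b ≤ h c → ∃ z : A, b ≤ h z ∧ a ⊓ z ≤ c) ↔
      ∀ S : Set (SpecL B), IsUpperSet S → IsUpperSet (f '' S) := by
  classical
  constructor
  · -- Frobenius → bounded
    intro H S hS
    rintro y1 y2 h12 ⟨x, hxS, rfl⟩
    have h12' : (f x).1 ≤ y2.1 := Subtype.coe_le_coe.mpr h12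
    -- filter F and ideal I on B
    set F : Set B := {w | ∃ a b, y2.1 a = true ∧ x.1 b = true ∧ h a ⊓ b ≤ w} with hFdef
    set I : Set B := {w | ∃ c, y2.1 c = false ∧ w ≤ h c} with hIdef
    have hF : Order.IsPFilter F := by
      refine Order.IsPFilter.of_def ⟨⊤, ⊤, ⊤, y2.2.2.2.1, x.2.2.2.1, le_top⟩ ?_ ?_
      · rintro w1 ⟨a1, b1, ha1, hb1, hle1⟩ w2 ⟨a2, b2, ha2, hb2, hle2⟩
        refine ⟨w1 ⊓ w2, ⟨a1 ⊓ a2, b1 ⊓ b2, ?_, ?_, ?_⟩, inf_le_left, inf_le_right⟩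
        · rw [y2.2.1, ha1, ha2]; rfl
        · rw [x.2.1, hb1, hb2]; rfl
        · refine le_inf (le_trans ?_ hle1) (le_trans ?_ hle2) <;>
            refine le_inf (le_trans inf_le_left ?_) (le_trans inf_le_right ?_)
          · rw [map_inf]; exact inf_le_left
          · exact inf_le_left
          · rw [map_inf]; exact inf_le_right
          · exact inf_le_right
      · rintro w1 w2 hle ⟨a1, b1, ha1, hb1, hle1⟩
        exact ⟨a1, b1, ha1, hb1, le_trans hle1 hle⟩
    have hI : Order.IsIdeal I := by
      refine ⟨?_, ⟨⊥, ⊥, y2.2.2.2.2, bot_le⟩, ?_⟩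
      · rintro w1 w2 hle ⟨c, hc, hlec⟩
        exact ⟨c, hc, le_trans hle hlec⟩
      · rintro w1 ⟨c1, hc1, hle1⟩ w2 ⟨c2, hc2, hle2⟩
        refine ⟨h (c1 ⊔ c2), ⟨c1 ⊔ c2, ?_, le_refl _⟩, ?_, ?_⟩
        · rw [y2.2.2.1, hc1, hc2]; rfl
        · exact le_trans hle1 (by rw [map_sup]; exact le_sup_left)
        · exact le_trans hle2 (by rw [map_sup]; exact le_sup_right)
    have hd : ∀ w, w ∈ F → w ∉ I := by
      rintro w ⟨a, b, ha, hb, hle⟩ ⟨c, hc, hlec⟩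
      have key : h a ⊓ b ≤ h (a ⊓ c) := by
        rw [map_inf]
        exact le_inf inf_le_left (le_trans hle hlec)
      obtain ⟨z, hbz, hazc⟩ := H a (a ⊓ c) b inf_le_left key
      -- x (h z) = true
      have hxz : x.1 (h z) = true := specMono x.2 hbz hb
      have hfz : (f x).1 z = true := by rw [hf]; exact hxz
      have hy2z : y2.1 z = true := bool_le_true (h12' z) hfz
      have hy2az : y2.1 (a ⊓ z) = true := by rw [y2.2.1, ha, hy2z]; rfl
      have : y2.1 c = true :=
        specMono y2.2 (le_trans hazc inf_le_right) hy2az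
      rw [hc] at this; exact absurd this (by simp)
    obtain ⟨x', hx'F, hx'I⟩ := exists_sep_point F I hF hI hd
    have hxx' : x ≤ x' := by
      rw [← Subtype.coe_le_coe]
      intro w
      cases hw : x.1 w
      · exact Bool.false_le _
      · have : w ∈ F := ⟨⊤, w, y2.2.2.2.1, hw, inf_le_right⟩
        rw [hx'F w this]
    have hfx' : f x' = y2 := by
      apply Subtype.ext; funext a
      rw [hf]
      cases hy : y2.1 a
      · exact hx'I (h a) ⟨a, hy, le_refl _⟩
      · exact hx'F (h a) ⟨a, ⊤, hy, x.2.2.2.1, inf_le_left⟩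
    exact ⟨x', hS hxx' hxS, hfx'⟩
  · -- bounded → Frobenius
    intro Hb a c b hca hle
    by_contra hne
    push_neg at hne
    -- filter F1 and principal ideal ↓c on A
    set F1 : Set A := {w | ∃ z, b ≤ h z ∧ a ⊓ z ≤ w} with hF1def
    set I1 : Set A := {w | w ≤ c} with hI1def
    have hF1 : Order.IsPFilter F1 := by
      refine Order.IsPFilter.of_def ⟨⊤, ⊤, by rw [map_top]; exact le_top, le_top⟩ ?_ ?_
      · rintro w1 ⟨z1, hz1, hle1⟩ w2 ⟨z2, hz2, hle2⟩
        refine ⟨w1 ⊓ w2, ⟨z1 ⊓ z2, ?_, ?_⟩, inf_le_left, inf_le_right⟩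
        · rw [map_inf]; exact le_inf hz1 hz2
        · exact le_inf (le_trans (inf_le_inf_left a inf_le_left) hle1)
            (le_trans (inf_le_inf_left a inf_le_right) hle2)
      · rintro w1 w2 hlew ⟨z1, hz1, hle1⟩
        exact ⟨z1, hz1, le_trans hle1 hlew⟩
    have hI1 : Order.IsIdeal I1 := by
      refine ⟨?_, ⟨c, le_refl c⟩, ?_⟩
      · intro w1 w2 hlew hw; exact le_trans hlew hw
      · intro w1 hw1 w2 hw2; exact ⟨c, le_refl c, hw1, hw2⟩
    have hd1 : ∀ w, w ∈ F1 → w ∉ I1 := by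
      rintro w ⟨z, hz, hlez⟩ hwc
      exact hne z hz (le_trans hlez hwc)
    obtain ⟨y', hy'F, hy'I⟩ := exists_sep_point F1 I1 hF1 hI1 hd1
    have hy'a : y'.1 a = true :=
      hy'F a ⟨⊤, by rw [map_top]; exact le_top, inf_le_left⟩
    have hy'c : y'.1 c = false := hy'I c (le_refl c)
    -- filter ↑b and ideal I2 on B
    set F2 : Set B := {w | b ≤ w} with hF2def
    set I2 : Set B := {w | ∃ v, y'.1 v = false ∧ w ≤ h v} with hI2def
    have hF2 : Order.IsPFilter F2 := by
      refine Order.IsPFilter.of_def ⟨b, le_refl b⟩ ?_ ?_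
      · intro w1 hw1 w2 hw2; exact ⟨w1 ⊓ w2, le_inf hw1 hw2, inf_le_left, inf_le_right⟩
      · intro w1 w2 hlew hw; exact le_trans hw hlew
    have hI2 : Order.IsIdeal I2 := by
      refine ⟨?_, ⟨⊥, c, hy'c, bot_le⟩, ?_⟩
      · rintro w1 w2 hlew ⟨v, hv, hlev⟩
        exact ⟨v, hv, le_trans hlew hlev⟩
      · rintro w1 ⟨v1, hv1, hle1⟩ w2 ⟨v2, hv2, hle2⟩
        refine ⟨h (v1 ⊔ v2), ⟨v1 ⊔ v2, ?_, le_refl _⟩, ?_, ?_⟩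
        · rw [y'.2.2.1, hv1, hv2]; rfl
        · exact le_trans hle1 (by rw [map_sup]; exact le_sup_left)
        · exact le_trans hle2 (by rw [map_sup]; exact le_sup_right)
    have hd2 : ∀ w, w ∈ F2 → w ∉ I2 := by
      rintro w hbw ⟨v, hv, hlev⟩
      have : v ∈ F1 := ⟨v, le_trans hbw hlev, inf_le_right⟩
      rw [hy'F v this] at hv; exact absurd hv (by simp)
    obtain ⟨x, hxF, hxI⟩ := exists_sep_point F2 I2 hF2 hI2 hd2
    have hxb : x.1 b = true := hxF b (le_refl b)
    -- the up-set S
    set S : Set (SpecL B) := {t | t.1 b = true} with hSdef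
    have hSup : IsUpperSet S := by
      intro t t' htt' ht
      exact bool_le_true (Subtype.coe_le_coe.mpr htt' b) ht
    have hfxy : f x ≤ y' := by
      rw [← Subtype.coe_le_coe]
      intro w
      cases hv : y'.1 w
      · have : x.1 (h w) = false := hxI (h w) ⟨w, hv, le_refl _⟩
        rw [hf, this]
      · exact Bool.le_true _
    have hy'mem : y' ∈ f '' S := Hb S hSup hfxy ⟨x, hxb, rfl⟩
    obtain ⟨x', hx'b, hfx'⟩ := hy'mem
    -- derive contradiction
    have hx'ha : x'.1 (h a) = true := by
      have : (f x').1 a = true := by rw [hfx', hy'a]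
      rwa [hf] at this
    have hx'inf : x'.1 (h a ⊓ b) = true := by
      rw [x'.2.1, hx'ha, hx'b]; rfl
    have hx'hc : x'.1 (h c) = true := specMono x'.2 hle hx'inf
    have : y'.1 c = true := by
      rw [← hfx', hf]; exact hx'hc
    rw [hy'c] at this; exact absurd this (by simp)
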